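/- Let μ_0 be a positive finite Borel measure with support equal to a compact set K ⊆ ℝ^n, and let f be continuous on K. If ∫_K g² f dμ_0 ≥ 0 for every polynomial g ∈ ℝ[x_1,...,x_n], then f(x) ≥ 0 for all x ∈ K. Conversely, if f ≥ 0 on K then ∫_K g² f dμ_0 ≥ 0 for all polynomials g. -/

import Mathlib

open MeasureTheory

section Aux

variable {n : ℕ} {K : Set (Fin n → ℝ)}

/-- Coordinate functions as continuous maps on `K`. -/
noncomputable def lasserreCoord (i : Fin n) : C(↥K, ℝ) :=
  ⟨fun x => x.1 i, (continuous_apply i).comp continuous_subtype_val⟩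

lemma lasserre_aeval_eq (p : MvPolynomial (Fin n) ℝ) (x : ↥K) :
    (MvPolynomial.aeval (lasserreCoord (K := K)) p) x = MvPolynomial.eval x.1 p := by
  induction p using MvPolynomial.induction_on with
  | C a => simp [lasserreCoord]
  | add p q hp hq => simp [hp, hq]
  | mul_X p i hp => simp [hp, lasserreCoord]

/-- Multivariate Stone–Weierstrass on a compact set: every continuous function on `K`
can be uniformly approximated by polynomials. -/
lemma lasserre_poly_approx (hK : IsCompact K) (h : C(↥K, ℝ)) {δ : ℝ} (hδ : 0 < δ) :
    ∃ g : MvPolynomial (Fin n) ℝ, ∀ x : ↥K, |MvPolynomial.eval x.1 g - h x| < δ := by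
  haveI : CompactSpace ↥K := isCompact_iff_compactSpace.mp hK
  set A : Subalgebra ℝ C(↥K, ℝ) :=
    (MvPolynomial.aeval (lasserreCoord (K := K)) :
      MvPolynomial (Fin n) ℝ →ₐ[ℝ] C(↥K, ℝ)).range
  have hsep : A.SeparatesPoints := by
    intro x y hxy
    have hne : x.1 ≠ y.1 := fun hh => hxy (Subtype.ext hh)
    obtain ⟨i, hi⟩ := Function.ne_iff.mp hne
    have hmem : MvPolynomial.aeval (lasserreCoord (K := K)) (MvPolynomial.X i) ∈ A :=
      ⟨MvPolynomial.X i, rfl⟩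
    refine ⟨MvPolynomial.aeval (lasserreCoord (K := K)) (MvPolynomial.X i),
      Set.mem_image_of_mem _ (SetLike.mem_coe.mpr hmem), ?_⟩
    simpa [lasserre_aeval_eq, lasserreCoord] using hi
  obtain ⟨⟨G, ⟨g, rfl⟩⟩, hG⟩ :=
    ContinuousMap.exists_mem_subalgebra_near_continuousMap_of_separatesPoints A hsep h δ hδ
  refine ⟨g, fun x => ?_⟩
  have := (ContinuousMap.norm_lt_iff _ hδ).mp hG x
  simpa [lasserre_aeval_eq, Real.norm_eq_abs] using this

end Aux

/-- Lasserre's positivity characterization: let `μ0` be a positive finite Borel measure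
whose support is the compact set `K` (i.e. `μ0` vanishes outside `K` and gives positive
mass to every open set meeting `K`), and let `f` be continuous on `K`. Then
`∫_K g² f dμ0 ≥ 0` for every polynomial `g` iff `f ≥ 0` on `K`. -/
theorem lasserre_positivity (n : ℕ) (K : Set (Fin n → ℝ)) (hK : IsCompact K)
    (μ0 : Measure (Fin n → ℝ)) [IsFiniteMeasure μ0] (hμ0 : μ0 Kᶜ = 0)
    (hsupp : ∀ U : Set (Fin n → ℝ), IsOpen U → (U ∩ K).Nonempty → 0 < μ0 U)
    (f : (Fin n → ℝ) → ℝ) (hf : ContinuousOn f K) :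
    (∀ g : MvPolynomial (Fin n) ℝ,
        0 ≤ ∫ x in K, (MvPolynomial.eval x g) ^ 2 * f x ∂μ0)
      ↔ ∀ x ∈ K, 0 ≤ f x := by
  constructor
  · -- hard direction
    intro h
    by_contra hcon
    push_neg at hcon
    obtain ⟨x₀, hx₀K, hx₀⟩ := hcon
    set c : ℝ := f x₀ / 2 with hc
    have hc0 : c < 0 := by simp [hc]; linarith
    -- continuity: a ball on which f < c
    have hnb : {y | f y < c} ∈ nhdsWithin x₀ K := by
      have := (hf x₀ hx₀K) (Iio_mem_nhds (show f x₀ < c by simp [hc]; linarith))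
      simpa [Set.preimage, Set.mem_Iio] using this
    obtain ⟨ε, hε, hball⟩ := Metric.mem_nhdsWithin_iff.mp hnb
    -- bound on f
    obtain ⟨M, hM⟩ := hK.exists_bound_of_continuousOn hf
    have hM0 : 0 ≤ M := le_trans (norm_nonneg _) (hM x₀ hx₀K)
    -- bump function
    set h₀ : (Fin n → ℝ) → ℝ := fun y => max 0 (1 - (2 / ε) * dist y x₀) with hh₀
    have h₀cont : Continuous h₀ := by
      apply continuous_const.max
      exact (continuous_const.sub (continuous_const.mul (continuous_id.dist continuous_const)))
    have h₀inner : ∀ y, dist y x₀ < ε / 4 → (1 : ℝ) / 2 ≤ h₀ y := by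
      intro y hy
      have : (2 / ε) * dist y x₀ ≤ 1 / 2 := by
        rw [div_mul_eq_mul_div, div_le_div_iff₀ hε (by norm_num)]
        nlinarith [dist_nonneg (x := y) (y := x₀)]
      simp only [hh₀, le_max_iff]; right; linarith
    have h₀outer : ∀ y, ε / 2 ≤ dist y x₀ → h₀ y = 0 := by
      intro y hy
      have : (1 : ℝ) ≤ (2 / ε) * dist y x₀ := by
        rw [div_mul_eq_mul_div, le_div_iff₀ hε]; linarith
      simp only [hh₀, max_eq_left_iff]; linarith
    -- the measure of the small ball
    set B₁ : Set (Fin n → ℝ) := Metric.ball x₀ (ε / 4) with hB₁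
    set B₂ : Set (Fin n → ℝ) := Metric.ball x₀ (ε / 2) with hB₂
    have hμB₁ : 0 < μ0 B₁ :=
      hsupp B₁ Metric.isOpen_ball ⟨x₀, Metric.mem_ball_self (by linarith), hx₀K⟩
    set m : ℝ := (μ0 B₁).toReal with hm
    have hm0 : 0 < m := ENNReal.toReal_pos hμB₁.ne' (measure_ne_top _ _)
    set μK : ℝ := (μ0 Set.univ).toReal with hμK
    have hμK0 : 0 ≤ μK := ENNReal.toReal_nonneg
    -- choice of δ
    set η : ℝ := -c * m / 16 with hη
    have hη0 : 0 < η := by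
      apply div_pos _ (by norm_num); exact mul_pos (by linarith) hm0
    set δ : ℝ := min (1 / 4) (Real.sqrt (η / (2 * (M + 1) * (μK + 1)))) with hδdef
    have hden : 0 < 2 * (M + 1) * (μK + 1) := by positivity
    have hδ0 : 0 < δ := lt_min (by norm_num) (Real.sqrt_pos.mpr (div_pos hη0 hden))
    have hδ14 : δ ≤ 1 / 4 := min_le_left _ _
    have hδsq : δ ^ 2 * (M * μK) ≤ η / 2 := by
      have h1 : δ ^ 2 ≤ η / (2 * (M + 1) * (μK + 1)) := by
        have := min_le_right (1 / 4) (Real.sqrt (η / (2 * (M + 1) * (μK + 1))))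
        calc δ ^ 2 ≤ (Real.sqrt (η / (2 * (M + 1) * (μK + 1)))) ^ 2 := by
              apply pow_le_pow_left₀ hδ0.le this
          _ = η / (2 * (M + 1) * (μK + 1)) := Real.sq_sqrt (by positivity)
      have h2 : M * μK ≤ (M + 1) * (μK + 1) := by nlinarith
      calc δ ^ 2 * (M * μK) ≤ (η / (2 * (M + 1) * (μK + 1))) * ((M + 1) * (μK + 1)) := by
            apply mul_le_mul h1 h2 (by positivity) (by positivity)
        _ = η / 2 := by field_simp
    -- polynomial approximation of the bump
    obtain ⟨g, hg0⟩ := lasserre_poly_approx hK ⟨fun x => h₀ x.1,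
      h₀cont.comp continuous_subtype_val⟩ hδ0
    have hg : ∀ x : ↥K, |MvPolynomial.eval x.1 g - h₀ x.1| < δ := fun x => by
      simpa using hg0 x
    -- the comparison function ψ
    set ψ : (Fin n → ℝ) → ℝ := fun y =>
      Set.indicator B₁ (fun _ => c / 16) y + Set.indicator B₂ᶜ (fun _ => δ ^ 2 * M) y with hψ
    -- pointwise bound on K
    have hpt : ∀ y ∈ K, (MvPolynomial.eval y g) ^ 2 * f y ≤ ψ y := by
      intro y hyK
      have hgy := hg ⟨y, hyK⟩
      by_cases hy2 : y ∈ B₂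
      · -- f y < c here
        have hfy : f y < c := hball ⟨by
            simpa [hB₂] using Metric.ball_subset_ball (by linarith) hy2, hyK⟩
        by_cases hy1 : y ∈ B₁
        · -- inner region
          have hge : (1 : ℝ) / 4 ≤ MvPolynomial.eval y g := by
            have := h₀inner y (by simpa [hB₁] using hy1)
            have habs := abs_lt.mp hgy
            simp only at habs ⊢; linarith [habs.1]
          have hsq : (1 : ℝ) / 16 ≤ (MvPolynomial.eval y g) ^ 2 := by nlinarith
          have : (MvPolynomial.eval y g) ^ 2 * f y ≤ (1 / 16) * c := by nlinarith
          have hψy : ψ y = c / 16 := by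
            simp only [hψ]
            rw [Set.indicator_of_mem hy1, Set.indicator_of_notMem
              (Set.notMem_compl_iff.mpr hy2), add_zero]
          rw [hψy]; linarith
        · -- middle region: ψ y = 0
          have hψy : ψ y = 0 := by
            simp only [hψ]
            rw [Set.indicator_of_notMem hy1, Set.indicator_of_notMem
              (Set.notMem_compl_iff.mpr hy2), add_zero]
          rw [hψy]
          have : (MvPolynomial.eval y g) ^ 2 * f y ≤ 0 :=
            mul_nonpos_of_nonneg_of_nonpos (sq_nonneg _) (by linarith)
          linarith
      · -- outer region
        have hd : ε / 2 ≤ dist y x₀ := by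
          by_contra hlt; push_neg at hlt; exact hy2 (by simpa [hB₂] using hlt)
        have h0y : h₀ y = 0 := h₀outer y hd
        have habs : |MvPolynomial.eval y g| < δ := by
          have := hgy; simp only [h0y, sub_zero] at this; simpa using this
        have hsq : (MvPolynomial.eval y g) ^ 2 ≤ δ ^ 2 := by
          have := sq_abs (MvPolynomial.eval y g) ▸
            pow_le_pow_left₀ (abs_nonneg _) habs.le 2
          simpa [sq_abs] using this
        have hfyM : f y ≤ M := le_trans (le_abs_self _) (hM y hyK)
        have : (MvPolynomial.eval y g) ^ 2 * f y ≤ δ ^ 2 * M := by nlinarith [sq_nonneg (MvPolynomial.eval y g)]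
        have hψy : ψ y = δ ^ 2 * M := by
          simp only [hψ]
          rw [Set.indicator_of_notMem (show y ∉ B₁ from fun hy1 =>
            hy2 (Metric.ball_subset_ball (by linarith) hy1)),
            Set.indicator_of_mem (show y ∈ B₂ᶜ from hy2), zero_add]
        rw [hψy]; exact this
    -- integrability
    have hKmeas : MeasurableSet K := hK.isClosed.measurableSet
    have hint1 : IntegrableOn (fun y => (MvPolynomial.eval y g) ^ 2 * f y) K μ0 :=
      (((MvPolynomial.continuous_eval g).continuousOn.pow 2).mul hf).integrableOn_compact hK
    have hB₁meas : MeasurableSet B₁ := Metric.isOpen_ball.measurableSet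
    have hB₂meas : MeasurableSet B₂ᶜ := Metric.isOpen_ball.measurableSet.compl
    have hind1 : Integrable (Set.indicator B₁ (fun _ => c / 16)) (μ0.restrict K) := by
      rw [integrable_indicator_iff hB₁meas]
      exact (integrableOn_const_iff).mpr (Or.inr (lt_of_le_of_lt (measure_mono (Set.subset_univ _))
        (measure_lt_top _ _)))
    have hind2 : Integrable (Set.indicator B₂ᶜ (fun _ => δ ^ 2 * M)) (μ0.restrict K) := by
      rw [integrable_indicator_iff hB₂meas]
      exact (integrableOn_const_iff).mpr (Or.inr (lt_of_le_of_lt (measure_mono (Set.subset_univ _))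
        (measure_lt_top _ _)))
    have hint2 : IntegrableOn ψ K μ0 := hind1.add hind2
    -- compare integrals
    have hcomp := setIntegral_mono_on hint1 hint2 hKmeas hpt
    -- compute ∫ ψ
    have hμB₁K : μ0.restrict K B₁ = μ0 B₁ := by
      rw [Measure.restrict_apply hB₁meas]
      apply le_antisymm (measure_mono Set.inter_subset_left)
      calc μ0 B₁ ≤ μ0 ((B₁ ∩ K) ∪ Kᶜ) := measure_mono (fun y hy => by
            by_cases hyK : y ∈ K
            · exact Or.inl ⟨hy, hyK⟩
            · exact Or.inr hyK)
        _ ≤ μ0 (B₁ ∩ K) + μ0 Kᶜ := measure_union_le _ _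
        _ = μ0 (B₁ ∩ K) := by rw [hμ0, add_zero]
    have hI1 : ∫ y in K, Set.indicator B₁ (fun _ => c / 16) y ∂μ0 = m * (c / 16) := by
      rw [integral_indicator_const _ hB₁meas]
      simp [hμB₁K, hm, smul_eq_mul, measureReal_def]
    have hI2 : ∫ y in K, Set.indicator B₂ᶜ (fun _ => δ ^ 2 * M) y ∂μ0 ≤ μK * (δ ^ 2 * M) := by
      rw [integral_indicator_const _ hB₂meas]
      simp only [smul_eq_mul]
      apply mul_le_mul_of_nonneg_right _ (by positivity)
      exact ENNReal.toReal_mono (measure_ne_top _ _) (le_trans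
        (measure_mono (Set.subset_univ _)) (Measure.restrict_le_self _))
    have hIψ : ∫ y in K, ψ y ∂μ0 ≤ m * (c / 16) + μK * (δ ^ 2 * M) := by
      rw [hψ]
      rw [integral_add hind1 hind2]
      rw [hI1]
      linarith [hI2]
    have hneg : ∫ y in K, (MvPolynomial.eval y g) ^ 2 * f y ∂μ0 < 0 := by
      have : m * (c / 16) + μK * (δ ^ 2 * M) < 0 := by
        have h1 : m * (c / 16) = -η := by rw [hη]; ring
        have h2 : μK * (δ ^ 2 * M) ≤ η / 2 := by
          calc μK * (δ ^ 2 * M) = δ ^ 2 * (M * μK) := by ring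
            _ ≤ η / 2 := hδsq
        linarith
      linarith [hcomp, hIψ]
    exact absurd (h g) (not_le.mpr hneg)
  · -- easy direction
    intro hpos g
    apply setIntegral_nonneg hK.isClosed.measurableSet
    intro x hx
    exact mul_nonneg (sq_nonneg _) (hpos x hx)
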